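/- Let L_1, L_2 be nonzero operators in K[∂;δ] of orders r_1, r_2 with r_2 ≤ r_1. In Ore's Euclidean scheme R_1 = L_1, R_2 = L_2, R_i = R_{i-2} − Q_iR_{i-1} with ord(R_i) < ord(R_{i-1}) for 3 ≤ i ≤ m and R_{m+1} = 0, define C_1 = 1, C_2 = 0, and C_i = C_{i-2} − Q_iC_{i-1} for 3 ≤ i ≤ m. Then (C_{m-1} − Q_{m+1}C_m)·R_1 is a least common left multiple of L_1 and L_2, where Q_{m+1} is the quotient of R_{m-1} by R_m. -/

import Mathlib

/-
Setting: a differential field `(K, δ)` (δ additive and Leibniz), and the ring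
`A = K[∂;δ]` of linear differential operators, axiomatised as follows:
a ring `A`, a ring embedding `ι : K →+* A`, an element `D = ∂` satisfying the
commutation rule `∂ a = a ∂ + δ(a)`, together with the fact that every element
of `A` is uniquely of the form `Σ ι(a_i) ∂^i` (the bijection `e`).
-/

noncomputable section

variable {K A : Type*}

/-- Order of a differential operator, read off from its coefficient expansion
(`e.symm x` is the finitely supported family of coefficients of `x` w.r.t. the powers `∂^i`). -/
def ordOf [Zero K] (e : (ℕ →₀ K) ≃ A) (x : A) : ℕ :=
  (e.symm x).support.sup id

/-- `φ_n` : the row vector `(a_n, a_{n-1}, ..., a_0)` of an operator of order `≤ n`. -/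
def phiV [Zero K] (e : (ℕ →₀ K) ≃ A) (n : ℕ) (x : A) : Fin (n + 1) → K :=
  fun j => e.symm x (n - (j : ℕ))

/-- Inverse of `φ_n` : the operator with coefficient vector `(a_n, ..., a_0)`. -/
def phiInv [AddCommMonoid K] (e : (ℕ →₀ K) ≃ A) (n : ℕ) (v : Fin (n + 1) → K) : A :=
  e (∑ j : Fin (n + 1), Finsupp.single (n - (j : ℕ)) (v j))

/-- The Sylvester-type matrix `S_n(P)` of an operator `P` of order `m`:
rows are `φ_n(∂^{n-m} P), ..., φ_n(P)`. -/
def Syl [Zero K] [Monoid A] (e : (ℕ →₀ K) ≃ A) (D : A) (n m : ℕ) (P : A) :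
    Matrix (Fin (n - m + 1)) (Fin (n + 1)) K :=
  Matrix.of fun i j => phiV e n (D ^ (n - m - (i : ℕ)) * P) j

/-- The block matrix `M_n` with diagonal blocks `S_n(L_i)` and a last block row
of negated identity matrices `S_n(-1)`. -/
def Mmat [Field K] [Ring A] (e : (ℕ →₀ K) ≃ A) (D : A) {k : ℕ}
    (L : Fin k → A) (r : Fin k → ℕ) (n : ℕ) :
    Matrix ((Σ i : Fin k, Fin (n - r i + 1)) ⊕ Fin (n + 1)) (Fin k × Fin (n + 1)) K :=
  Matrix.of fun row col =>
    match row with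
    | Sum.inl ⟨i, a⟩ => if i = col.1 then Syl e D n (r i) (L i) a col.2 else 0
    | Sum.inr a => if (a : ℕ) = (col.2 : ℕ) then -1 else 0

/-- `M` is a (nonzero) common left multiple of the family `L`. -/
def IsCLM [Ring A] {k : ℕ} (L : Fin k → A) (M : A) : Prop :=
  M ≠ 0 ∧ ∀ i, ∃ Q, M = Q * L i

/-- `M` is a least common left multiple of the family `L`: a common left multiple
of minimal order. -/
def IsLCLM [Field K] [Ring A] (e : (ℕ →₀ K) ≃ A) {k : ℕ} (L : Fin k → A) (M : A) : Prop :=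
  IsCLM L M ∧ ∀ M', IsCLM L M' → ordOf e M ≤ ordOf e M'

end

noncomputable section OreAuxSec
namespace OreAux

set_option linter.unusedSectionVars false

/-- Pair-valued recursion for the second cofactor sequence. -/
def ddP {A : Type*} [Ring A] (Q : ℕ → A) : ℕ → A × A
  | 0 => (0, 1)
  | (k+1) => ((ddP Q k).2, (ddP Q k).1 - Q (k+3) * (ddP Q k).2)

/-- The second cofactor sequence `D` with `D 1 = 0`, `D 2 = 1`,
`D i = D (i-2) - Q i * D (i-1)`. -/
def ddf {A : Type*} [Ring A] (Q : ℕ → A) (i : ℕ) : A := (ddP Q (i-1)).1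

lemma ddf_one {A : Type*} [Ring A] (Q : ℕ → A) : ddf Q 1 = 0 := rfl

lemma ddf_two {A : Type*} [Ring A] (Q : ℕ → A) : ddf Q 2 = 1 := rfl

lemma ddf_rec {A : Type*} [Ring A] (Q : ℕ → A) (k : ℕ) :
    ddf Q (k+3) = ddf Q (k+1) - Q (k+3) * ddf Q (k+2) := rfl

variable {K A : Type*} [Field K] [Ring A]
variable (δ : K →+ K) (ι : K →+* A) (D : A) (e : (ℕ →₀ K) ≃ A)
variable (he : ∀ f : ℕ →₀ K, e f = f.sum fun i a => ι a * D ^ i)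
variable (hcomm : ∀ a : K, D * ι a = ι a * D + ι (δ a))
include he

lemma e_add (f g : ℕ →₀ K) : e (f + g) = e f + e g := by
  rw [he, he, he]
  exact Finsupp.sum_add_index' (by simp) (by intro i a b; rw [map_add, add_mul])

lemma e_zero : e 0 = 0 := by rw [he]; simp

lemma e_single (n : ℕ) (a : K) : e (Finsupp.single n a) = ι a * D ^ n := by
  rw [he]; exact Finsupp.sum_single_index (by simp)

/-- `e` as an additive equivalence. -/
def ee : (ℕ →₀ K) ≃+ A := { e with map_add' := e_add ι D e he }

lemma co_zero : e.symm (0 : A) = 0 := map_zero (ee ι D e he).symm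

lemma co_sub (x y : A) : e.symm (x - y) = e.symm x - e.symm y :=
  map_sub (ee ι D e he).symm x y

lemma co_neg (x : A) : e.symm (-x) = -e.symm x := map_neg (ee ι D e he).symm x

lemma co_sum {s : Finset ℕ} (z : ℕ → A) :
    e.symm (∑ i ∈ s, z i) = ∑ i ∈ s, e.symm (z i) :=
  map_sum (ee ι D e he).symm z s

lemma ne_zero_co (x : A) (hx : x ≠ 0) : e.symm x ≠ 0 := by
  intro h
  exact hx (by rw [← e.apply_symm_apply x, h, e_zero ι D e he])

lemma ne_zero_of_coeff (x : A) (j : ℕ) (h : e.symm x j ≠ 0) : x ≠ 0 := by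
  intro hx
  rw [hx, co_zero ι D e he] at h
  simp at h

lemma ra_mul (a : K) (f : ℕ →₀ K) :
    ι a * e f = e (Finsupp.mapRange (a * ·) (mul_zero a) f) := by
  rw [he, he, Finsupp.sum_mapRange_index (by simp), Finsupp.sum, Finset.mul_sum]
  exact Finset.sum_congr rfl (by intro i _; rw [← mul_assoc, ← map_mul])

lemma co_ra (a : K) (z : A) (j : ℕ) : e.symm (ι a * z) j = a * e.symm z j := by
  rw [show ι a * z = ι a * e (e.symm z) by rw [e.apply_symm_apply],
    ra_mul ι D e he, e.symm_apply_apply]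
  simp

include hcomm in
lemma D_mul (f : ℕ →₀ K) :
    D * e f = e (Finsupp.mapDomain Nat.succ f + Finsupp.mapRange δ (map_zero δ) f) := by
  rw [e_add ι D e he, he, he, he, Finsupp.sum_mapRange_index (by simp),
    Finsupp.sum_mapDomain_index (by simp) (by intro i a b; rw [map_add, add_mul])]
  rw [Finsupp.sum, Finsupp.sum, Finsupp.sum, Finset.mul_sum, ← Finset.sum_add_distrib]
  refine Finset.sum_congr rfl ?_
  intro i _
  rw [← mul_assoc, hcomm, add_mul, mul_assoc, ← pow_succ']

include hcomm in
lemma pow_coeff (k : ℕ) (x : A) (n : ℕ) (hx : ∀ j, n < j → e.symm x j = 0) :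
    (∀ j, n + k < j → e.symm (D ^ k * x) j = 0) ∧ e.symm (D ^ k * x) (n + k) = e.symm x n := by
  induction k with
  | zero => simpa using hx
  | succ k ih =>
    have hstep : D ^ (k+1) * x = D * (D ^ k * x) := by rw [pow_succ', mul_assoc]
    have hg : e.symm (D ^ (k+1) * x)
        = Finsupp.mapDomain Nat.succ (e.symm (D ^ k * x))
          + Finsupp.mapRange δ (map_zero δ) (e.symm (D ^ k * x)) := by
      rw [hstep, ← e.apply_symm_apply (D ^ k * x), D_mul δ ι D e he hcomm,
        e.symm_apply_apply, e.apply_symm_apply]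
    constructor
    · intro j hj
      obtain ⟨j', rfl⟩ : ∃ j', j = j' + 1 := ⟨j - 1, by omega⟩
      rw [hg]
      simp only [Finsupp.add_apply, Finsupp.mapRange_apply]
      rw [show j' + 1 = Nat.succ j' from rfl,
        Finsupp.mapDomain_apply Nat.succ_injective]
      rw [ih.1 j' (by omega), ih.1 (j' + 1) (by omega), map_zero, add_zero]
    · rw [hg]
      simp only [Finsupp.add_apply, Finsupp.mapRange_apply]
      rw [show n + (k + 1) = Nat.succ (n + k) from rfl,
        Finsupp.mapDomain_apply Nat.succ_injective]
      rw [ih.2, ih.1 (n + k + 1) (by omega), map_zero, add_zero]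

include hcomm in
lemma mul_coeff (x y : A) (n m : ℕ)
    (hx : ∀ j, n < j → e.symm x j = 0) (hy : ∀ j, m < j → e.symm y j = 0) :
    (∀ j, n + m < j → e.symm (x * y) j = 0)
      ∧ e.symm (x * y) (n + m) = e.symm x n * e.symm y m := by
  have hrep : x * y = ∑ i ∈ (e.symm x).support, ι ((e.symm x) i) * (D ^ i * y) := by
    conv_lhs => rw [← e.apply_symm_apply x, he]
    rw [Finsupp.sum, Finset.sum_mul]
    exact Finset.sum_congr rfl (by intro i _; rw [mul_assoc])
  have hco : ∀ j, e.symm (x * y) j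
      = ∑ i ∈ (e.symm x).support, (e.symm x) i * e.symm (D ^ i * y) j := by
    intro j
    rw [hrep, co_sum ι D e he]
    rw [Finsupp.finset_sum_apply]
    exact Finset.sum_congr rfl (by intro i _; rw [co_ra ι D e he])
  have hsupp : ∀ i ∈ (e.symm x).support, i ≤ n := by
    intro i hi
    by_contra h
    exact (Finsupp.mem_support_iff.mp hi) (hx i (by omega))
  constructor
  · intro j hj
    rw [hco j]
    refine Finset.sum_eq_zero ?_
    intro i hi
    rw [(pow_coeff δ ι D e he hcomm i y m hy).1 j (by have := hsupp i hi; omega), mul_zero]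
  · rw [hco (n + m)]
    rw [Finset.sum_eq_single n]
    · rcases eq_or_ne ((e.symm x) n) 0 with h | h
      · rw [h, zero_mul, zero_mul]
      · rw [show n + m = m + n by omega, (pow_coeff δ ι D e he hcomm n y m hy).2]
    · intro i hi hne
      have hin : i < n := lt_of_le_of_ne (hsupp i hi) hne
      rw [(pow_coeff δ ι D e he hcomm i y m hy).1 (n + m) (by omega), mul_zero]
    · intro hn
      rw [Finsupp.notMem_support_iff.mp hn, zero_mul]

lemma coeff_ord (x : A) (hx : x ≠ 0) :
    e.symm x (ordOf e x) ≠ 0 ∧ ∀ j, ordOf e x < j → e.symm x j = 0 := by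
  have hne : (e.symm x).support.Nonempty :=
    Finsupp.support_nonempty_iff.mpr (ne_zero_co ι D e he x hx)
  constructor
  · rw [← Finsupp.mem_support_iff]
    show (e.symm x).support.sup id ∈ _
    rw [← Finset.sup'_eq_sup hne id, ← Finset.max'_eq_sup']
    exact Finset.max'_mem _ hne
  · intro j hj
    rw [← Finsupp.notMem_support_iff]
    intro hmem
    have h2 := Finset.le_sup (f := id) hmem
    simp only [id] at h2
    have hj' : (e.symm x).support.sup id < j := hj
    omega

lemma ord_eq (x : A) (k : ℕ) (h1 : e.symm x k ≠ 0) (h2 : ∀ j, k < j → e.symm x j = 0) :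
    ordOf e x = k := by
  show (e.symm x).support.sup id = k
  apply le_antisymm
  · apply Finset.sup_le
    intro j hj
    rw [Finsupp.mem_support_iff] at hj
    simp only [id]
    by_contra h
    exact hj (h2 j (by omega))
  · exact Finset.le_sup (f := id) (Finsupp.mem_support_iff.mpr h1)

include hcomm in
lemma ord_mul (x y : A) (hx : x ≠ 0) (hy : y ≠ 0) :
    x * y ≠ 0 ∧ ordOf e (x * y) = ordOf e x + ordOf e y := by
  obtain ⟨h1x, h2x⟩ := coeff_ord ι D e he x hx
  obtain ⟨h1y, h2y⟩ := coeff_ord ι D e he y hy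
  obtain ⟨hhigh, htop⟩ := mul_coeff δ ι D e he hcomm x y _ _ h2x h2y
  have hne : e.symm (x * y) (ordOf e x + ordOf e y) ≠ 0 := by
    rw [htop]; exact mul_ne_zero h1x h1y
  exact ⟨ne_zero_of_coeff ι D e he _ _ hne, ord_eq ι D e he _ _ hne hhigh⟩

lemma ord_sub_dom (x y : A) (hx : x ≠ 0) (hy : y = 0 ∨ ordOf e y < ordOf e x) :
    x - y ≠ 0 ∧ ordOf e (x - y) = ordOf e x := by
  obtain ⟨h1x, h2x⟩ := coeff_ord ι D e he x hx
  have hy0 : ∀ j, ordOf e x ≤ j → e.symm y j = 0 := by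
    intro j hj
    rcases eq_or_ne y 0 with rfl | hyne
    · rw [co_zero ι D e he]; rfl
    · rcases hy with rfl | hlt
      · simp at hyne
      · exact (coeff_ord ι D e he y hyne).2 j (by omega)
  have h1 : e.symm (x - y) (ordOf e x) ≠ 0 := by
    rw [co_sub ι D e he]
    simp only [Finsupp.sub_apply]
    rw [hy0 _ (le_refl _), sub_zero]
    exact h1x
  have h2 : ∀ j, ordOf e x < j → e.symm (x - y) j = 0 := by
    intro j hj
    rw [co_sub ι D e he]
    simp only [Finsupp.sub_apply]
    rw [h2x j hj, hy0 j (by omega), sub_zero]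
  exact ⟨ne_zero_of_coeff ι D e he _ _ h1, ord_eq ι D e he _ _ h1 h2⟩

lemma ord_neg (x : A) : ordOf e (-x) = ordOf e x := by
  show ((e.symm (-x)).support).sup id = _
  rw [co_neg ι D e he, Finsupp.support_neg]
  rfl

lemma one_facts : (1 : A) ≠ 0 ∧ ordOf e (1 : A) = 0 ∧ e.symm (1 : A) = Finsupp.single 0 1 := by
  have h1 : e (Finsupp.single 0 1) = 1 := by rw [e_single ι D e he]; simp
  have hco : e.symm (1 : A) = Finsupp.single 0 1 := by rw [← h1, e.symm_apply_apply]
  have hne : (1 : A) ≠ 0 := by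
    apply ne_zero_of_coeff ι D e he _ 0
    rw [hco]
    simp
  refine ⟨hne, ?_, hco⟩
  apply ord_eq ι D e he _ 0
  · rw [hco]; simp
  · intro j hj
    rw [hco, Finsupp.single_apply]
    simp only [ite_eq_right_iff]
    intro h
    omega

end OreAux
end OreAuxSec

/-- the extended Euclidean–Ore scheme. With remainders `R`,
quotients `Q` and cofactors `C` as in Ore's algorithm, `(C_{m-1} − Q_{m+1} C_m) R₁`
is a least common left multiple of `L₁` and `L₂`. -/
theorem extended_euclid_lclm [Field K] [Ring A]
    (δ : K →+ K) (hLeib : ∀ a b : K, δ (a * b) = a * δ b + δ a * b)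
    (ι : K →+* A) (D : A)
    (hcomm : ∀ a : K, D * ι a = ι a * D + ι (δ a))
    (e : (ℕ →₀ K) ≃ A)
    (he : ∀ f : ℕ →₀ K, e f = f.sum fun i a => ι a * D ^ i)
    (L₁ L₂ : A) (hL₁ : L₁ ≠ 0) (hL₂ : L₂ ≠ 0)
    (r₁ r₂ : ℕ) (hr₁ : ordOf e L₁ = r₁) (hr₂ : ordOf e L₂ = r₂) (hr : r₂ ≤ r₁)
    (m : ℕ) (hm : 2 ≤ m)
    (R Q C : ℕ → A)
    (hR1 : R 1 = L₁) (hR2 : R 2 = L₂)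
    (hdiv : ∀ i, 3 ≤ i → i ≤ m + 1 → R i = R (i - 2) - Q i * R (i - 1))
    (hRne : ∀ i, 1 ≤ i → i ≤ m → R i ≠ 0)
    (hdec : ∀ i, 3 ≤ i → i ≤ m → ordOf e (R i) < ordOf e (R (i - 1)))
    (hRm1 : R (m + 1) = 0)
    (hC1 : C 1 = 1) (hC2 : C 2 = 0)
    (hCrec : ∀ i, 3 ≤ i → i ≤ m → C i = C (i - 2) - Q i * C (i - 1)) :
    IsLCLM e ![L₁, L₂] ((C (m - 1) - Q (m + 1) * C m) * R 1) := by
  obtain ⟨hone_ne, hone_ord, -⟩ := OreAux.one_facts ι D e he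
  set c : A := C (m - 1) - Q (m + 1) * C m with hc
  have hordR1 : ordOf e (R 1) = r₁ := by rw [hR1, hr₁]
  have hordR2 : ordOf e (R 2) = r₂ := by rw [hR2, hr₂]
  -- strict decrease over two steps
  have hlt2 : ∀ i, 3 ≤ i → i ≤ m → ordOf e (R i) < ordOf e (R (i - 2)) := by
    intro i h3 him
    rcases eq_or_lt_of_le h3 with h | h
    · have h1 := hdec 3 (le_refl 3) (by omega)
      have e1 : (3:ℕ) - 1 = 2 := rfl
      rw [e1] at h1
      rw [← h]
      have e2 : (3:ℕ) - 2 = 1 := rfl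
      rw [e2, hordR1]
      omega
    · have h1 := hdec i (by omega) him
      have h2 := hdec (i - 1) (by omega) (by omega)
      have e2 : i - 1 - 1 = i - 2 := by omega
      rw [e2] at h2
      omega
  -- quotient degrees
  have hQ : ∀ i, 3 ≤ i → i ≤ m + 1 →
      Q i ≠ 0 ∧ ordOf e (Q i) + ordOf e (R (i - 1)) = ordOf e (R (i - 2)) := by
    intro i h3 him
    have hQR : Q i * R (i - 1) = R (i - 2) - R i := by
      rw [hdiv i h3 him, sub_sub_cancel]
    have hx : R (i - 2) ≠ 0 := hRne (i - 2) (by omega) (by omega)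
    have hyc : R i = 0 ∨ ordOf e (R i) < ordOf e (R (i - 2)) := by
      rcases eq_or_lt_of_le him with h | h
      · left; rw [h, hRm1]
      · right; exact hlt2 i h3 (by omega)
    obtain ⟨hsne, hsord⟩ := OreAux.ord_sub_dom ι D e he _ _ hx hyc
    have hQne : Q i ≠ 0 := by
      intro h
      rw [h, zero_mul] at hQR
      exact hsne hQR.symm
    have hRone : R (i - 1) ≠ 0 := hRne (i - 1) (by omega) (by omega)
    have hmul := (OreAux.ord_mul δ ι D e he hcomm _ _ hQne hRone).2
    rw [hQR, hsord] at hmul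
    exact ⟨hQne, hmul.symm⟩
  -- C 3 = 1
  have hC3 : 3 ≤ m → C 3 = 1 := by
    intro h
    have := hCrec 3 (le_refl 3) h
    have e1 : (3:ℕ) - 2 = 1 := rfl
    have e2 : (3:ℕ) - 1 = 2 := rfl
    rw [e1, e2, hC1, hC2, mul_zero, sub_zero] at this
    exact this
  -- cofactor degrees
  have hCl : ∀ i, 3 ≤ i → i ≤ m → C i ≠ 0 ∧ ordOf e (C i) + ordOf e (R (i - 1)) = r₂ := by
    intro i
    induction i using Nat.strong_induction_on with
    | _ i ih =>
      intro h3 him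
      match i, h3 with
      | 3, _ =>
        refine ⟨by rw [hC3 him]; exact hone_ne, ?_⟩
        rw [hC3 him]
        have e2 : (3:ℕ) - 1 = 2 := rfl
        rw [e2, hone_ord, hordR2, zero_add]
      | 4, _ =>
        have h4 : C 4 = -(Q 4) := by
          have := hCrec 4 (by omega) him
          have e1 : (4:ℕ) - 2 = 2 := rfl
          have e2 : (4:ℕ) - 1 = 3 := rfl
          rw [e1, e2, hC2, hC3 (by omega), mul_one, zero_sub] at this
          exact this
        obtain ⟨hq4, hq4o⟩ := hQ 4 (by omega) (by omega)
        have e1 : (4:ℕ) - 2 = 2 := rfl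
        have e2 : (4:ℕ) - 1 = 3 := rfl
        rw [e1, e2, hordR2] at hq4o
        refine ⟨by rw [h4]; exact neg_ne_zero.mpr hq4, ?_⟩
        rw [h4, OreAux.ord_neg ι D e he, show (4:ℕ) - 1 = 3 from rfl]
        omega
      | (k+5), _ =>
        set i := k + 5 with hi
        have hrec := hCrec i (by omega) him
        have e1 : i - 2 = k + 3 := by omega
        have e2 : i - 1 = k + 4 := by omega
        rw [e1, e2] at hrec
        obtain ⟨hc1ne, hc1o⟩ := ih (k+4) (by omega) (by omega) (by omega)
        obtain ⟨hc2ne, hc2o⟩ := ih (k+3) (by omega) (by omega) (by omega)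
        have e3 : k + 4 - 1 = k + 3 := by omega
        have e4 : k + 3 - 1 = k + 2 := by omega
        rw [e3] at hc1o
        rw [e4] at hc2o
        obtain ⟨hqne, hqo⟩ := hQ i (by omega) (by omega)
        rw [e1, e2] at hqo
        obtain ⟨htne, hto⟩ := OreAux.ord_mul δ ι D e he hcomm _ _ hqne hc1ne
        -- ord R (k+4) < ord R (k+2)
        have hlt := hlt2 (k+4) (by omega) (by omega)
        have e5 : k + 4 - 2 = k + 2 := by omega
        rw [e5] at hlt
        have hdom : C (k+3) = 0 ∨ ordOf e (C (k+3)) < ordOf e (Q i * C (k+4)) := by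
          right; omega
        obtain ⟨hine, hio⟩ := OreAux.ord_sub_dom ι D e he _ _ htne hdom
        have hCi : C i = -(Q i * C (k+4) - C (k+3)) := by rw [hrec, neg_sub]
        refine ⟨by rw [hCi]; exact neg_ne_zero.mpr hine, ?_⟩
        rw [hCi, OreAux.ord_neg ι D e he, hio, e2]
        omega
  -- the leading cofactor c
  have hcfact : c ≠ 0 ∧ ordOf e c + ordOf e (R m) = r₂ := by
    by_cases hm2 : m = 2
    · subst hm2
      rw [hc, show (2:ℕ) - 1 = 1 from rfl, hC1, hC2, mul_zero, sub_zero]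
      exact ⟨hone_ne, by rw [hone_ord, hordR2]; omega⟩
    · by_cases hm3 : m = 3
      · subst hm3
        rw [hc, show (3:ℕ) - 1 = 2 from rfl, show (3:ℕ) + 1 = 4 from rfl, hC2, hC3 (by omega), mul_one, zero_sub]
        obtain ⟨hq4, hq4o⟩ := hQ 4 (by omega) (by omega)
        rw [show (4:ℕ) - 1 = 3 from rfl, show (4:ℕ) - 2 = 2 from rfl, hordR2] at hq4o
        refine ⟨neg_ne_zero.mpr hq4, ?_⟩
        rw [OreAux.ord_neg ι D e he]
        omega
      · -- 4 ≤ m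
        have h4 : 4 ≤ m := by omega
        obtain ⟨hqne, hqo⟩ := hQ (m+1) (by omega) (by omega)
        have e1 : m + 1 - 1 = m := by omega
        have e2 : m + 1 - 2 = m - 1 := by omega
        rw [e1, e2] at hqo
        obtain ⟨hcmne, hcmo⟩ := hCl m (by omega) (le_refl m)
        obtain ⟨hcm1ne, hcm1o⟩ := hCl (m-1) (by omega) (by omega)
        have e3 : m - 1 - 1 = m - 2 := by omega
        rw [e3] at hcm1o
        obtain ⟨htne, hto⟩ := OreAux.ord_mul δ ι D e he hcomm _ _ hqne hcmne
        have hlt := hlt2 m (by omega) (le_refl m)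
        have hdom : C (m-1) = 0 ∨ ordOf e (C (m-1)) < ordOf e (Q (m+1) * C m) := by
          right; omega
        obtain ⟨hine, hio⟩ := OreAux.ord_sub_dom ι D e he _ _ htne hdom
        have hCc : c = -(Q (m+1) * C m - C (m-1)) := by rw [hc, neg_sub]
        refine ⟨by rw [hCc]; exact neg_ne_zero.mpr hine, ?_⟩
        rw [hCc, OreAux.ord_neg ι D e he, hio]
        omega
  obtain ⟨hcne, hco⟩ := hcfact
  have hR1ne : R 1 ≠ 0 := hRne 1 (by omega) (by omega)
  obtain ⟨hMne, hMo⟩ := OreAux.ord_mul δ ι D e he hcomm c (R 1) hcne hR1ne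
  -- Bezout identities
  have hBez : ∀ i, 1 ≤ i → i ≤ m → R i = C i * L₁ + OreAux.ddf Q i * L₂ := by
    intro i
    induction i using Nat.strong_induction_on with
    | _ i ih =>
      intro h1 him
      match i, h1 with
      | 1, _ => rw [hR1, hC1, OreAux.ddf_one, one_mul, zero_mul, add_zero]
      | 2, _ => rw [hR2, hC2, OreAux.ddf_two, one_mul, zero_mul, zero_add]
      | (k+3), _ =>
        have hd := hdiv (k+3) (by omega) (by omega)
        have hcr := hCrec (k+3) (by omega) (by omega)
        have e1 : k + 3 - 2 = k + 1 := by omega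
        have e2 : k + 3 - 1 = k + 2 := by omega
        rw [e1, e2] at hd hcr
        rw [hd, ih (k+1) (by omega) (by omega) (by omega),
          ih (k+2) (by omega) (by omega) (by omega), hcr, OreAux.ddf_rec]
        noncomm_ring
  -- common left multiple property
  have hCLM2 : c * L₁ = (-(OreAux.ddf Q (m-1) - Q (m+1) * OreAux.ddf Q m)) * L₂ := by
    have h1 := hBez (m-1) (by omega) (by omega)
    have h2 := hBez m (by omega) (le_refl m)
    have h0 := hdiv (m+1) (by omega) (by omega)
    have e1 : m + 1 - 2 = m - 1 := by omega
    have e2 : m + 1 - 1 = m := by omega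
    rw [e1, e2, hRm1] at h0
    have key : c * L₁ + (OreAux.ddf Q (m-1) - Q (m+1) * OreAux.ddf Q m) * L₂
        = (C (m-1) * L₁ + OreAux.ddf Q (m-1) * L₂)
          - Q (m+1) * (C m * L₁ + OreAux.ddf Q m * L₂) := by
      rw [hc]; noncomm_ring
    rw [← h1, ← h2, ← h0] at key
    rw [neg_mul]
    exact eq_neg_of_add_eq_zero_left (by rw [key])
  constructor
  · constructor
    · exact hMne
    · intro i
      match i with
      | 0 => exact ⟨c, by rw [Matrix.cons_val_zero, hR1]⟩
      | 1 =>
        refine ⟨-(OreAux.ddf Q (m-1) - Q (m+1) * OreAux.ddf Q m), ?_⟩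
        rw [Matrix.cons_val_one, Matrix.cons_val_fin_one, hR1, hCLM2]
  · rintro M' ⟨hM'ne, hM'div⟩
    obtain ⟨U, hU⟩ := hM'div 0
    obtain ⟨V, hV⟩ := hM'div 1
    rw [Matrix.cons_val_zero] at hU
    rw [Matrix.cons_val_one, Matrix.cons_val_fin_one] at hV
    have hUne : U ≠ 0 := by
      rintro rfl
      rw [zero_mul] at hU
      exact hM'ne hU
    have chain : ∀ i, 2 ≤ i → i ≤ m →
        ∃ X Y : A, X ≠ 0 ∧ X * R (i - 1) = Y * R i ∧
          ordOf e (X * R (i - 1)) + r₁ + r₂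
            = ordOf e M' + ordOf e (R (i - 1)) + ordOf e (R i) := by
      intro i h2
      induction i, h2 using Nat.le_induction with
      | base =>
        intro _
        refine ⟨U, V, hUne, ?_, ?_⟩
        · have e1 : (2:ℕ) - 1 = 1 := rfl
          rw [e1, hR1, hR2, ← hU, ← hV]
        · have e1 : (2:ℕ) - 1 = 1 := rfl
          rw [e1, hR1, ← hU, hr₁, hordR2]
      | succ i hi ih =>
        intro him
        obtain ⟨X, Y, hX, hXY, hordi⟩ := ih (by omega)
        have hd := hdiv (i+1) (by omega) (by omega)
        have e1 : i + 1 - 2 = i - 1 := by omega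
        have e2 : i + 1 - 1 = i := by omega
        rw [e1, e2] at hd
        have hkey : (Y - X * Q (i+1)) * R i = X * R (i+1) := by
          rw [hd, mul_sub, sub_mul, ← hXY, mul_assoc]
        have hRi1ne : R (i+1) ≠ 0 := hRne (i+1) (by omega) him
        obtain ⟨hXRne, hXRo⟩ := OreAux.ord_mul δ ι D e he hcomm X (R (i+1)) hX hRi1ne
        have hX'ne : Y - X * Q (i+1) ≠ 0 := by
          intro h
          rw [h, zero_mul] at hkey
          exact hXRne hkey.symm
        have hRi1ne' : R (i - 1) ≠ 0 := hRne (i-1) (by omega) (by omega)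
        have hXRo' := (OreAux.ord_mul δ ι D e he hcomm X (R (i-1)) hX hRi1ne').2
        refine ⟨Y - X * Q (i+1), X, hX'ne, by rw [e2, hkey], ?_⟩
        rw [e2, hkey, hXRo]
        rw [hXRo'] at hordi
        omega
    obtain ⟨X, Y, hX, hXY, hord⟩ := chain m (by omega) (le_refl m)
    have hRm1ne : R (m - 1) ≠ 0 := hRne (m-1) (by omega) (by omega)
    have h1 := (OreAux.ord_mul δ ι D e he hcomm X (R (m-1)) hX hRm1ne).2
    rw [h1] at hord
    rw [hMo, hordR1]
    omega
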